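/- Benjamini–Hochberg FDR control under independence: let p₁, …, pₘ be p-values where the p-values corresponding to true null hypotheses are i.i.d. uniform on [0,1] and independent of the others. Let the BH procedure at level α reject hypothesis i if pᵢ ≤ (k*/m)·α where k* = max{k : p₍ₖ₎ ≤ (k/m)α} (with p₍ₖ₎ the order statistics). Then the expected false discovery proportion E[V / max(R,1)] ≤ (m₀/m)·α ≤ α, where V is the number of rejected true nulls, R the total number of rejections, and m₀ the number of true nulls. -/

import Mathlib

open MeasureTheory ProbabilityTheory Finset

open scoped Classical in
/-- The BH cutoff index `k* = max{k ≤ m : at least k p-values are ≤ (k/m)·α}`,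
equivalently `max{k : p₍ₖ₎ ≤ (k/m)·α}` in terms of order statistics. -/
noncomputable def bhK {m : ℕ} (α : ℝ) (pv : Fin m → ℝ) : ℕ :=
  Nat.findGreatest
    (fun k => k ≤ (Finset.univ.filter (fun i => pv i ≤ (k : ℝ) / m * α)).card) m

open scoped Classical in
/-- The Benjamini–Hochberg rejection set at level `α`: reject `i` iff `pᵢ ≤ (k*/m)·α`. -/
noncomputable def bhRejects {m : ℕ} (α : ℝ) (pv : Fin m → ℝ) : Finset (Fin m) :=
  Finset.univ.filter (fun i => pv i ≤ (bhK α pv : ℝ) / m * α)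

/-- The heterogeneous family consisting of the null p-values individually together with the
vector of non-null p-values, used to express "nulls are mutually independent and independent
of the non-nulls". -/
def nullFam {Ω : Type*} {m : ℕ} (H0 : Finset (Fin m)) (p : Fin m → Ω → ℝ) :
    (j : {i // i ∈ H0} ⊕ Unit) →
      Ω → Sum.elim (fun _ : {i // i ∈ H0} => ℝ) (fun _ : Unit => {i : Fin m // i ∉ H0} → ℝ) j
  | Sum.inl i => p i.1
  | Sum.inr _ => fun ω i => p i.1 ω

def nullFamSpace {m : ℕ} (H0 : Finset (Fin m)) :
    (j : {i // i ∈ H0} ⊕ Unit) →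
      MeasurableSpace
        (Sum.elim (fun _ : {i // i ∈ H0} => ℝ) (fun _ : Unit => {i : Fin m // i ∉ H0} → ℝ) j)
  | Sum.inl _ => inferInstanceAs (MeasurableSpace ℝ)
  | Sum.inr _ => inferInstanceAs (MeasurableSpace ({i : Fin m // i ∉ H0} → ℝ))

open scoped Classical

namespace BHaux

variable {m : ℕ} {α : ℝ} {pv : Fin m → ℝ}

lemma thr_mono (hα : 0 ≤ α) {k k' : ℕ} (h : k ≤ k') :
    (k : ℝ) / m * α ≤ (k' : ℝ) / m * α := by
  have e1 : (k : ℝ) / m * α = k * (α / m) := by ring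
  have e2 : (k' : ℝ) / m * α = k' * (α / m) := by ring
  rw [e1, e2]
  exact mul_le_mul_of_nonneg_right (by exact_mod_cast h) (div_nonneg hα (Nat.cast_nonneg m))

lemma filter_mono (hα : 0 ≤ α) {k k' : ℕ} (h : k ≤ k') :
    (Finset.univ.filter (fun i => pv i ≤ (k : ℝ) / m * α)) ⊆
      (Finset.univ.filter (fun i => pv i ≤ (k' : ℝ) / m * α)) := by
  intro i hi
  simp only [Finset.mem_filter, Finset.mem_univ, true_and] at *
  exact hi.trans (thr_mono hα h)

lemma bhK_le : bhK α pv ≤ m := Nat.findGreatest_le m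

lemma pred_bhK :
    bhK α pv ≤ (Finset.univ.filter (fun i => pv i ≤ (bhK α pv : ℝ) / m * α)).card := by
  rcases eq_or_ne (bhK α pv) 0 with h | h
  · rw [h]; exact Nat.zero_le _
  · exact (Nat.findGreatest_eq_iff.1 (rfl : bhK α pv = bhK α pv)).2.1 h

lemma card_bhRejects (hα : 0 ≤ α) : (bhRejects α pv).card = bhK α pv := by
  set r := (bhRejects α pv).card with hr
  have h1 : bhK α pv ≤ r := pred_bhK
  have h2 : r ≤ bhK α pv := by
    apply Nat.le_findGreatest
    · exact (Finset.card_filter_le _ _).trans (by simp)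
    · calc r = (Finset.univ.filter (fun i => pv i ≤ (bhK α pv : ℝ) / m * α)).card := rfl
        _ ≤ (Finset.univ.filter (fun i => pv i ≤ (r : ℝ) / m * α)).card :=
          Finset.card_le_card (filter_mono hα h1)
  omega

/-- leave-one-out vector -/
noncomputable def loo (pv : Fin m → ℝ) (i : Fin m) : Fin m → ℝ :=
  fun j => if j = i then 0 else pv j

lemma bhK_le_loo (hα : 0 ≤ α) (i : Fin m) : bhK α pv ≤ bhK α (loo pv i) := by
  apply Nat.findGreatest_mono _ le_rfl
  intro k hk
  refine hk.trans (Finset.card_le_card ?_)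
  intro j hj
  simp only [Finset.mem_filter, Finset.mem_univ, true_and, loo] at *
  by_cases h : j = i
  · refine Finset.mem_filter.2 ⟨Finset.mem_univ _, ?_⟩
    simp only [loo, if_pos h]
    exact mul_nonneg (div_nonneg (Nat.cast_nonneg _) (Nat.cast_nonneg _)) hα
  · refine Finset.mem_filter.2 ⟨Finset.mem_univ _, ?_⟩
    simpa [loo, h] using hj

lemma bhK_loo_eq (hα : 0 ≤ α) {i : Fin m}
    (hpi : pv i ≤ (bhK α (loo pv i) : ℝ) / m * α) : bhK α pv = bhK α (loo pv i) := by
  refine le_antisymm (bhK_le_loo hα i) ?_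
  apply Nat.le_findGreatest bhK_le
  have h : (Finset.univ.filter (fun j => loo pv i j ≤ (bhK α (loo pv i) : ℝ) / m * α)) =
      (Finset.univ.filter (fun j => pv j ≤ (bhK α (loo pv i) : ℝ) / m * α)) := by
    apply Finset.filter_congr
    intro j _
    by_cases h : j = i
    · subst h
      simp only [loo, if_pos rfl]
      exact iff_of_true
        (mul_nonneg (div_nonneg (Nat.cast_nonneg _) (Nat.cast_nonneg _)) hα) hpi
    · simp [loo, h]
  calc bhK α (loo pv i)
      ≤ (Finset.univ.filter (fun j => loo pv i j ≤ (bhK α (loo pv i) : ℝ) / m * α)).card :=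
        pred_bhK
    _ = _ := by rw [h]

lemma mem_bhRejects_iff (hα : 0 ≤ α) {i : Fin m} :
    i ∈ bhRejects α pv ↔ pv i ≤ (bhK α (loo pv i) : ℝ) / m * α := by
  constructor
  · intro hi
    simp only [bhRejects, Finset.mem_filter, Finset.mem_univ, true_and] at hi
    exact hi.trans (thr_mono hα (bhK_le_loo hα i))
  · intro hpi
    simp only [bhRejects, Finset.mem_filter, Finset.mem_univ, true_and]
    rw [bhK_loo_eq hα hpi]
    exact hpi

lemma measurable_findGreatest {γ : Type*} [MeasurableSpace γ] (N : ℕ) (P : γ → ℕ → Prop)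
    [inst : ∀ x, DecidablePred (P x)]
    (hP : ∀ k, MeasurableSet {x | P x k}) :
    Measurable (fun x => Nat.findGreatest (P x) N) := by
  induction N with
  | zero => simp only [Nat.findGreatest_zero]; exact measurable_const
  | succ n ih =>
    have h : (fun x => Nat.findGreatest (P x) (n+1)) =
        fun x => if P x (n+1) then (n+1 : ℕ) else Nat.findGreatest (P x) n := by
      funext x; exact Nat.findGreatest_succ _
    rw [h]
    exact Measurable.ite (hP (n+1)) measurable_const ih

lemma measurable_card (c : ℝ) :
    Measurable (fun pv : Fin m → ℝ =>
      (Finset.univ.filter (fun i => pv i ≤ c)).card) := by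
  have h : (fun pv : Fin m → ℝ => (Finset.univ.filter (fun i => pv i ≤ c)).card) =
      fun pv => ∑ i : Fin m, if pv i ≤ c then 1 else 0 := by
    funext pv; rw [Finset.card_filter]
  rw [h]
  apply Finset.measurable_sum
  intro i _
  have hs : MeasurableSet {pv : Fin m → ℝ | pv i ≤ c} :=
    measurableSet_le (measurable_pi_apply i) measurable_const
  exact Measurable.ite hs measurable_const measurable_const

lemma measurable_bhK (α : ℝ) : Measurable (fun pv : Fin m → ℝ => bhK α pv) := by
  unfold bhK
  apply measurable_findGreatest
  intro k
  have h : {pv : Fin m → ℝ |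
      k ≤ (Finset.univ.filter (fun i => pv i ≤ (k : ℝ) / m * α)).card} =
      (fun pv : Fin m → ℝ => (Finset.univ.filter (fun i => pv i ≤ (k : ℝ) / m * α)).card) ⁻¹'
        (Set.Ici k) := rfl
  rw [h]
  exact (measurable_card _) (measurableSet_Ici)

lemma measurable_loo (i : Fin m) : Measurable (fun pv : Fin m → ℝ => loo pv i) := by
  apply measurable_pi_lambda
  intro j
  by_cases h : j = i
  · simp only [loo, if_pos h]; exact measurable_const
  · simp only [loo, if_neg h]; exact measurable_pi_apply j

/-! ### Independence scaffolding -/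

noncomputable def Tset (H0 : Finset (Fin m)) (i : Fin m) (hi : i ∈ H0) :
    Finset ({x // x ∈ H0} ⊕ Unit) :=
  ({Sum.inl ⟨i, hi⟩} : Finset ({x // x ∈ H0} ⊕ Unit))ᶜ

lemma inl_mem_Tset {H0 : Finset (Fin m)} {i : Fin m} {hi : i ∈ H0} {j : Fin m} (hj2 : j ∈ H0)
    (hne : j ≠ i) : (Sum.inl ⟨j, hj2⟩ : {x // x ∈ H0} ⊕ Unit) ∈ Tset H0 i hi := by
  simp only [Tset, Finset.mem_compl, Finset.mem_singleton, Sum.inl.injEq, Subtype.mk.injEq]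
  exact hne

lemma inr_mem_Tset {H0 : Finset (Fin m)} {i : Fin m} {hi : i ∈ H0} :
    (Sum.inr () : {x // x ∈ H0} ⊕ Unit) ∈ Tset H0 i hi := by
  simp [Tset]

noncomputable def recon (H0 : Finset (Fin m)) (i : Fin m) (hi : i ∈ H0)
    (g : ∀ x : {x // x ∈ Tset H0 i hi},
      Sum.elim (fun _ : {x // x ∈ H0} => ℝ) (fun _ : Unit => {i : Fin m // i ∉ H0} → ℝ) x.1) :
    Fin m → ℝ :=
  fun j =>
    if hj : j = i then 0
    else if hj2 : j ∈ H0 then g ⟨Sum.inl ⟨j, hj2⟩, inl_mem_Tset hj2 hj⟩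
    else g ⟨Sum.inr (), inr_mem_Tset⟩ ⟨j, hj2⟩

lemma recon_eval {Ω : Type*} (H0 : Finset (Fin m)) (i : Fin m) (hi : i ∈ H0)
    (p : Fin m → Ω → ℝ) (ω : Ω) :
    recon H0 i hi (fun x => nullFam H0 p x.1 ω) = loo (fun j => p j ω) i := by
  funext j
  by_cases hj : j = i
  · simp [recon, loo, hj]
  · by_cases hj2 : j ∈ H0
    · simp [recon, loo, hj, hj2, nullFam]
    · simp [recon, loo, hj, hj2, nullFam]

lemma measurable_recon (H0 : Finset (Fin m)) (i : Fin m) (hi : i ∈ H0) :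
    @Measurable _ _
      (MeasurableSpace.pi (m := fun x : {x // x ∈ Tset H0 i hi} => nullFamSpace H0 x.1)) _
      (recon H0 i hi) := by
  letI inst : ∀ j : {x // x ∈ H0} ⊕ Unit,
      MeasurableSpace
        (Sum.elim (fun _ : {x // x ∈ H0} => ℝ) (fun _ : Unit => {i : Fin m // i ∉ H0} → ℝ) j) :=
    nullFamSpace H0
  apply measurable_pi_lambda
  intro j
  by_cases hj : j = i
  · simp only [recon, dif_pos hj]; exact measurable_const
  · by_cases hj2 : j ∈ H0
    · simp only [recon, dif_neg hj, hj, hj2, ↓reduceDIte]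
      exact @measurable_pi_apply _ _ (fun x : {x // x ∈ Tset H0 i hi} => nullFamSpace H0 x.1)
        ⟨Sum.inl ⟨j, hj2⟩, inl_mem_Tset hj2 hj⟩
    · simp only [recon, dif_neg hj, hj2, ↓reduceDIte]
      exact (measurable_pi_apply (⟨j, hj2⟩ : {i : Fin m // i ∉ H0})).comp
        (@measurable_pi_apply _ _ (fun x : {x // x ∈ Tset H0 i hi} => nullFamSpace H0 x.1)
          ⟨Sum.inr (), inr_mem_Tset⟩)

end BHaux

/-- Benjamini–Hochberg FDR control under independence: if the null p-values are i.i.d.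
uniform on `[0,1]` and independent of the non-null p-values, then the expected false
discovery proportion of the BH procedure at level `α` is at most `(m₀/m)·α ≤ α`. -/
theorem stmt4 {Ω : Type*} [MeasurableSpace Ω] {μ : Measure Ω} [IsProbabilityMeasure μ]
    {m : ℕ} (hm : 0 < m) (H0 : Finset (Fin m)) (p : Fin m → Ω → ℝ)
    (hmeas : ∀ i, Measurable (p i))
    (hrange : ∀ i ω, p i ω ∈ Set.Icc (0 : ℝ) 1)
    (hunif : ∀ i ∈ H0,
      Measure.map (p i) μ = (volume : Measure ℝ).restrict (Set.Icc (0 : ℝ) 1))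
    (hindep : @iIndepFun _ _ _ _ (nullFamSpace H0) (nullFam H0 p) μ)
    (α : ℝ) (hα : α ∈ Set.Ioc (0 : ℝ) 1) :
    (∫ ω, ((bhRejects α (fun i => p i ω) ∩ H0).card : ℝ) /
        max ((bhRejects α (fun i => p i ω)).card : ℝ) 1 ∂μ)
      ≤ (H0.card : ℝ) / m * α ∧
    (H0.card : ℝ) / m * α ≤ α := by
  obtain ⟨hα0, hα1⟩ := hα
  have hα0' : (0:ℝ) ≤ α := le_of_lt hα0
  have hcard : (H0.card : ℝ) ≤ m := by
    exact_mod_cast (Finset.card_le_univ H0).trans (by simp)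
  constructor
  · -- main FDR bound
    set K : Fin m → Ω → ℕ := fun i ω => bhK α (BHaux.loo (fun j => p j ω) i) with hK
    have hKmeas : ∀ i, Measurable (K i) := by
      intro i
      exact (BHaux.measurable_bhK α).comp
        ((BHaux.measurable_loo i).comp (measurable_pi_lambda _ (fun j => hmeas j)))
    have hKle : ∀ i ω, K i ω ≤ m := fun i ω => BHaux.bhK_le
    -- the sets
    set A : Fin m → ℕ → Set Ω := fun i k => {ω | p i ω ≤ (k : ℝ) / m * α} with hA
    set B : Fin m → ℕ → Set Ω := fun i k => K i ⁻¹' {k} with hB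
    have hAmeas : ∀ i k, MeasurableSet (A i k) :=
      fun i k => measurableSet_le (hmeas i) measurable_const
    have hBmeas : ∀ i k, MeasurableSet (B i k) :=
      fun i k => (hKmeas i) (measurableSet_singleton k)
    -- pointwise identity
    have hpoint : ∀ ω,
        ((bhRejects α (fun i => p i ω) ∩ H0).card : ℝ) /
            max ((bhRejects α (fun i => p i ω)).card : ℝ) 1 =
          ∑ i ∈ H0, ∑ k ∈ Finset.range (m+1),
            Set.indicator (A i k ∩ B i k) (fun _ => (1:ℝ) / max (k:ℝ) 1) ω := by
      intro ω
      have hcardsum : ((bhRejects α (fun i => p i ω) ∩ H0).card : ℝ) =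
          ∑ i ∈ H0, if i ∈ bhRejects α (fun i => p i ω) then (1:ℝ) else 0 := by
        rw [Finset.inter_comm, ← Finset.filter_mem_eq_inter, Finset.card_filter]
        push_cast
        rfl
      rw [hcardsum, Finset.sum_div]
      apply Finset.sum_congr rfl
      intro i hiH0
      have hKrange : K i ω ∈ Finset.range (m+1) := Finset.mem_range.2 (Nat.lt_succ_of_le (hKle i ω))
      rw [Finset.sum_eq_single_of_mem (K i ω) hKrange (fun k _ hk =>
        Set.indicator_of_notMem (fun hmem => hk hmem.2.symm) _)]
      by_cases hiR : i ∈ bhRejects α (fun i => p i ω)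
      · have hpi : p i ω ≤ ((K i ω : ℝ)) / m * α := (BHaux.mem_bhRejects_iff hα0').1 hiR
        have hKr : ((bhRejects α (fun i => p i ω)).card : ℝ) = (K i ω : ℝ) := by
          exact_mod_cast congrArg Nat.cast
            ((BHaux.card_bhRejects hα0').trans (BHaux.bhK_loo_eq hα0' hpi))
        have hωmem : ω ∈ A i (K i ω) ∩ B i (K i ω) := ⟨hpi, rfl⟩
        rw [Set.indicator_of_mem hωmem, if_pos hiR, hKr]
      · have hpi : ¬ p i ω ≤ ((K i ω : ℝ)) / m * α :=
          fun h => hiR ((BHaux.mem_bhRejects_iff hα0').2 h)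
        rw [if_neg hiR, Set.indicator_of_notMem (fun hmem => hpi hmem.1), zero_div]
    -- integrability of each indicator
    have hint : ∀ i ∈ H0, ∀ k ∈ Finset.range (m+1),
        Integrable (Set.indicator (A i k ∩ B i k) (fun _ => (1:ℝ) / max (k:ℝ) 1)) μ :=
      fun i _ k _ =>
        (integrable_const _).indicator ((hAmeas i k).inter (hBmeas i k))
    -- compute the integral
    have hcalc : (∫ ω, ((bhRejects α (fun i => p i ω) ∩ H0).card : ℝ) /
            max ((bhRejects α (fun i => p i ω)).card : ℝ) 1 ∂μ) =
        ∑ i ∈ H0, ∑ k ∈ Finset.range (m+1),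
          (μ (A i k ∩ B i k)).toReal * ((1:ℝ) / max (k:ℝ) 1) := by
      simp only [hpoint]
      rw [integral_finset_sum H0 (fun i hi => integrable_finset_sum _ (hint i hi))]
      apply Finset.sum_congr rfl
      intro i hi
      rw [integral_finset_sum _ (hint i hi)]
      apply Finset.sum_congr rfl
      intro k _
      rw [integral_indicator_const _ ((hAmeas i k).inter (hBmeas i k)), smul_eq_mul, measureReal_def]
    rw [hcalc]
    -- independence: μ (A ∩ B) = μ A * μ B
    have hindep2 : ∀ i ∈ H0, ∀ k, μ (A i k ∩ B i k) = μ (A i k) * μ (B i k) := by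
      intro i hi k
      letI inst : ∀ j : {x // x ∈ H0} ⊕ Unit,
          MeasurableSpace (Sum.elim (fun _ : {x // x ∈ H0} => ℝ)
            (fun _ : Unit => {i : Fin m // i ∉ H0} → ℝ) j) :=
        nullFamSpace H0
      have hmeas' : ∀ j, Measurable (nullFam H0 p j) := by
        intro j
        cases j with
        | inl x => exact hmeas x.1
        | inr x => exact measurable_pi_lambda _ (fun y => hmeas y.1)
      have hST : Disjoint ({Sum.inl ⟨i, hi⟩} : Finset ({x // x ∈ H0} ⊕ Unit))
          (BHaux.Tset H0 i hi) := by
        simp only [BHaux.Tset]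
        exact disjoint_compl_right
      have h2 := hindep.indepFun_finset ({Sum.inl ⟨i, hi⟩} : Finset ({x // x ∈ H0} ⊕ Unit))
        (BHaux.Tset H0 i hi) hST hmeas'
      have h3 := h2.comp
        (measurable_pi_apply
          (⟨Sum.inl ⟨i, hi⟩, Finset.mem_singleton_self _⟩ :
            {x // x ∈ ({Sum.inl ⟨i, hi⟩} : Finset ({x // x ∈ H0} ⊕ Unit))}))
        ((BHaux.measurable_bhK α).comp (BHaux.measurable_recon H0 i hi))
      have h4 : IndepFun (p i) (K i) μ := by
        have he2 : (fun ω => bhK α (BHaux.recon H0 i hi (fun x => nullFam H0 p x.1 ω))) = K i := by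
          funext ω
          exact congrArg (bhK α) (BHaux.recon_eval H0 i hi p ω)
        rw [← he2]
        exact h3
      exact h4.measure_inter_preimage_eq_mul (Set.Iic ((k : ℝ) / m * α)) {k}
        measurableSet_Iic (measurableSet_singleton k)
    -- uniform: μ (A i k) = ofReal ((k:ℝ)/m*α) for k ≤ m
    have hAval : ∀ i ∈ H0, ∀ k ≤ m, μ (A i k) = ENNReal.ofReal ((k:ℝ)/m*α) := by
      intro i hi k hk
      have hm' : (0:ℝ) < m := by exact_mod_cast hm
      have ht0 : 0 ≤ (k:ℝ)/m*α := by positivity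
      have ht1 : (k:ℝ)/m*α ≤ 1 := by
        have h1 : (k:ℝ)/m ≤ 1 := by
          rw [div_le_one hm']
          exact_mod_cast hk
        calc (k:ℝ)/m*α ≤ 1*1 := by
              apply mul_le_mul h1 hα1 hα0'
              exact zero_le_one
          _ = 1 := one_mul 1
      have hA' : A i k = p i ⁻¹' Set.Iic ((k:ℝ)/m*α) := rfl
      rw [hA', ← Measure.map_apply (hmeas i) measurableSet_Iic, hunif i hi,
        Measure.restrict_apply measurableSet_Iic]
      have hset : Set.Iic ((k:ℝ)/m*α) ∩ Set.Icc 0 1 = Set.Icc 0 ((k:ℝ)/m*α) := by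
        ext x
        simp only [Set.mem_inter_iff, Set.mem_Iic, Set.mem_Icc]
        constructor
        · rintro ⟨h1, h2, h3⟩
          exact ⟨h2, h1⟩
        · rintro ⟨h1, h2⟩
          exact ⟨h2, h1, h2.trans ht1⟩
      rw [hset, Real.volume_Icc, sub_zero]
    -- bound each inner sum
    have hbound : ∀ i ∈ H0,
        (∑ k ∈ Finset.range (m+1),
          (μ (A i k ∩ B i k)).toReal * ((1:ℝ) / max (k:ℝ) 1)) ≤ α / m := by
      intro i hi
      have hm' : (0:ℝ) < m := by exact_mod_cast hm
      have hterm : ∀ k ∈ Finset.range (m+1),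
          (μ (A i k ∩ B i k)).toReal * ((1:ℝ) / max (k:ℝ) 1) ≤
            (α / m) * (μ (B i k)).toReal := by
        intro k hk
        rw [hindep2 i hi k, hAval i hi k (Nat.lt_succ_iff.1 (Finset.mem_range.1 hk)),
          ENNReal.toReal_mul, ENNReal.toReal_ofReal (by positivity)]
        have hb0 : 0 ≤ (μ (B i k)).toReal := ENNReal.toReal_nonneg
        have hfac : (k:ℝ)/m*α * ((1:ℝ) / max (k:ℝ) 1) ≤ α / m := by
          rcases Nat.eq_zero_or_pos k with hk0 | hk0
          · subst hk0
            simp only [Nat.cast_zero, zero_div, zero_mul]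
            positivity
          · have hk1 : (1:ℝ) ≤ (k:ℝ) := by exact_mod_cast hk0
            rw [max_eq_left hk1]
            have hkne : (k:ℝ) ≠ 0 := by positivity
            have : (k:ℝ)/m*α * ((1:ℝ) / (k:ℝ)) = α / m := by
              field_simp
            rw [this]
        calc ((k:ℝ)/m*α) * (μ (B i k)).toReal * ((1:ℝ) / max (k:ℝ) 1)
            = ((k:ℝ)/m*α * ((1:ℝ) / max (k:ℝ) 1)) * (μ (B i k)).toReal := by ring
          _ ≤ (α / m) * (μ (B i k)).toReal := mul_le_mul_of_nonneg_right hfac hb0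
      have hdisj : (↑(Finset.range (m+1)) : Set ℕ).PairwiseDisjoint (fun k => B i k) := by
        intro a _ b _ hab
        simp only [Function.onFun, Set.disjoint_left]
        intro ω ha hb
        exact hab (ha.symm.trans hb)
      have hsum : ∑ k ∈ Finset.range (m+1), (μ (B i k)).toReal ≤ 1 := by
        have h1 : ∑ k ∈ Finset.range (m+1), μ (B i k) ≤ 1 := by
          rw [← measure_biUnion_finset hdisj (fun k _ => hBmeas i k)]
          exact prob_le_one
        have h2 : (∑ k ∈ Finset.range (m+1), μ (B i k)).toReal =
            ∑ k ∈ Finset.range (m+1), (μ (B i k)).toReal :=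
          ENNReal.toReal_sum (fun k _ => measure_ne_top μ _)
        rw [← h2]
        simpa using ENNReal.toReal_mono ENNReal.one_ne_top h1
      calc (∑ k ∈ Finset.range (m+1), (μ (A i k ∩ B i k)).toReal * ((1:ℝ) / max (k:ℝ) 1))
          ≤ ∑ k ∈ Finset.range (m+1), (α / m) * (μ (B i k)).toReal :=
            Finset.sum_le_sum hterm
        _ = (α / m) * ∑ k ∈ Finset.range (m+1), (μ (B i k)).toReal := by
            rw [Finset.mul_sum]
        _ ≤ (α / m) * 1 := by
            apply mul_le_mul_of_nonneg_left hsum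
            positivity
        _ = α / m := mul_one _
    calc (∑ i ∈ H0, ∑ k ∈ Finset.range (m+1),
            (μ (A i k ∩ B i k)).toReal * ((1:ℝ) / max (k:ℝ) 1))
        ≤ ∑ i ∈ H0, α / m := Finset.sum_le_sum hbound
      _ = H0.card * (α / m) := by rw [Finset.sum_const, nsmul_eq_mul]
      _ = (H0.card : ℝ) / m * α := by ring
  · -- (m₀/m)·α ≤ α
    have h1 : (H0.card : ℝ) / m ≤ 1 := by
      rw [div_le_one (by exact_mod_cast hm)]
      exact hcard
    calc (H0.card : ℝ) / m * α ≤ 1 * α :=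
          mul_le_mul_of_nonneg_right h1 hα0'
      _ = α := one_mul α
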